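/- If f : H_n → H_n is an additive commuting map, then for each 2 ≤ i ≤ n−1 and every X ∈ H_n, the (1,i)-entry of f(X) equals Σ_{j=2}^{n−1} [ X_{1,j}·f_{j,n}(e_{i,n}) − f_{1,j}(e_{i,n})·X_{j,n} ], where f_{a,b}(Y) denotes the (a,b)-entry of f(Y). -/

import Mathlib

open Matrix

/-- `X` belongs to the Heisenberg algebra `H_n`: its only possibly nonzero entries lie
in the first row strictly above the diagonal or the last column strictly above the diagonal
(0-based indices: row 0 with column ≠ 0, or column `n-1` with row ≠ `n-1`). -/
def IsHeis {n : ℕ} {F : Type*} [Field F] (X : Matrix (Fin n) (Fin n) F) : Prop :=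
  ∀ i j : Fin n, ¬ ((i.val = 0 ∧ j.val ≠ 0) ∨ (j.val = n - 1 ∧ i.val ≠ n - 1)) → X i j = 0

/-- Anti-transpose: `(antiT X) i j = X (rev j) (rev i)`. -/
def antiT {n : ℕ} {F : Type*} [Field F] (X : Matrix (Fin n) (Fin n) F) :
    Matrix (Fin n) (Fin n) F :=
  Matrix.of fun i j => X j.rev i.rev

/-- `A ∈ C_n`: first and last rows and columns of `A` are zero. -/
def IsC {n : ℕ} {F : Type*} [Field F] (A : Matrix (Fin n) (Fin n) F) : Prop :=
  ∀ i j : Fin n, (i.val = 0 ∨ i.val = n - 1 ∨ j.val = 0 ∨ j.val = n - 1) → A i j = 0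

/-- `A ∈ P_n`: hollow skew-persymmetric matrices in `C_n`. -/
def IsP {n : ℕ} {F : Type*} [Field F] (A : Matrix (Fin n) (Fin n) F) : Prop :=
  IsC A ∧ (∀ i j : Fin n, antiT A i j = - A i j) ∧ (∀ i : Fin n, A i i.rev = 0)

theorem stmt12 {n : ℕ} (hn : 3 ≤ n) {F : Type*} [Field F] [CharZero F]
    (f : Matrix (Fin n) (Fin n) F → Matrix (Fin n) (Fin n) F)
    (hmaps : ∀ X, IsHeis X → IsHeis (f X))
    (hadd : ∀ X Y, IsHeis X → IsHeis Y → f (X + Y) = f X + f Y)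
    (hcomm : ∀ X, IsHeis X → f X * X = X * f X) :
    ∀ i : Fin n, 1 ≤ i.val → i.val ≤ n - 2 → ∀ X, IsHeis X →
      f X ⟨0, by omega⟩ i =
        ∑ j : Fin n, if 1 ≤ j.val ∧ j.val ≤ n - 2 then
          X ⟨0, by omega⟩ j * f (Matrix.single i ⟨n - 1, by omega⟩ (1 : F)) j ⟨n - 1, by omega⟩
          - f (Matrix.single i ⟨n - 1, by omega⟩ (1 : F)) ⟨0, by omega⟩ j * X j ⟨n - 1, by omega⟩
        else 0 := by
  intro i hi1 hi2 X hX
  set a0 : Fin n := ⟨0, by omega⟩ with ha0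
  set an : Fin n := ⟨n - 1, by omega⟩ with han
  set E : Matrix (Fin n) (Fin n) F := Matrix.single i an (1 : F) with hEdef
  have hia0 : i ≠ a0 := by
    intro h; apply absurd (congrArg Fin.val h); simp [ha0]; omega
  have hE : IsHeis E := by
    intro a b hab
    by_cases h : i = a ∧ an = b
    · exfalso; apply hab; right
      constructor
      · rw [← h.2]
      · rw [← h.1]; omega
    · simp [hEdef, Matrix.single, h]
  have hXE : IsHeis (X + E) := by
    intro a b hab
    simp [Matrix.add_apply, hX a b hab, hE a b hab]
  have hfX := hmaps X hX
  have hfE := hmaps E hE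
  -- column/row facts about E
  have hEcol : ∀ g : Fin n → F, (∑ k, g k * E k an) = g i := by
    intro g
    rw [Finset.sum_eq_single i]
    · simp [hEdef, Matrix.single]
    · intro k _ hk
      have hik : i ≠ k := fun h => hk h.symm
      simp [hEdef, Matrix.single, hik]
    · simp
  have hErow : ∀ g : Fin n → F, (∑ k, E a0 k * g k) = 0 := by
    intro g
    apply Finset.sum_eq_zero
    intro k _
    simp [hEdef, Matrix.single, hia0]
  -- commuting relations at entry (a0, an)
  have c1 : (∑ k, f X a0 k * X k an) = ∑ k, X a0 k * f X k an := by
    have := congrFun (congrFun (hcomm X hX) a0) an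
    rwa [Matrix.mul_apply, Matrix.mul_apply] at this
  have c2 : f E a0 i = 0 := by
    have h := congrFun (congrFun (hcomm E hE) a0) an
    rw [Matrix.mul_apply, Matrix.mul_apply, hEcol, hErow] at h
    exact h
  have c3 : (∑ k, f X a0 k * X k an) + f X a0 i + ((∑ k, f E a0 k * X k an) + f E a0 i)
      = (∑ k, X a0 k * f X k an) + (∑ k, X a0 k * f E k an) := by
    have h := congrFun (congrFun (hcomm (X + E) hXE) a0) an
    rw [hadd X E hX hE] at h
    rw [Matrix.mul_apply, Matrix.mul_apply] at h
    simp only [Matrix.add_apply] at h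
    have hl : (∑ k, (f X a0 k + f E a0 k) * (X k an + E k an))
        = (∑ k, f X a0 k * X k an) + (∑ k, f X a0 k * E k an)
          + ((∑ k, f E a0 k * X k an) + (∑ k, f E a0 k * E k an)) := by
      rw [← Finset.sum_add_distrib, ← Finset.sum_add_distrib, ← Finset.sum_add_distrib]
      exact Finset.sum_congr rfl fun k _ => by ring
    have hr : (∑ k, (X a0 k + E a0 k) * (f X k an + f E k an))
        = (∑ k, X a0 k * f X k an) + (∑ k, X a0 k * f E k an)
          + ((∑ k, E a0 k * f X k an) + (∑ k, E a0 k * f E k an)) := by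
      rw [← Finset.sum_add_distrib, ← Finset.sum_add_distrib, ← Finset.sum_add_distrib]
      exact Finset.sum_congr rfl fun k _ => by ring
    rw [hl, hr, hEcol, hEcol, hErow, hErow] at h
    linear_combination h
  -- main identity
  have key : f X a0 i = ∑ k, (X a0 k * f E k an - f E a0 k * X k an) := by
    rw [Finset.sum_sub_distrib]
    linear_combination c3 - c1 - c2
  rw [key]
  apply Finset.sum_congr rfl
  intro j _
  by_cases hj : 1 ≤ j.val ∧ j.val ≤ n - 2
  · rw [if_pos hj]
  · rw [if_neg hj]
    have hj' : j.val = 0 ∨ j.val = n - 1 := by omega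
    rcases hj' with h | h
    · have h1 : X a0 j = 0 := hX a0 j (by simp [ha0]; omega)
      have h2 : f E a0 j = 0 := hfE a0 j (by simp [ha0]; omega)
      rw [h1, h2]; ring
    · have h1 : f E j an = 0 := hfE j an (by simp [han]; omega)
      have h2 : X j an = 0 := hX j an (by simp [han]; omega)
      rw [h1, h2]; ring
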